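/- Assume [k : k^p] < ∞. For any ideals a and b of S one has (a ∩ b)^{[p]} = a^{[p]} ∩ b^{[p]}. Consequently, for any ideal J of S and any h ∈ S, there exists a smallest ideal τ of S (with respect to inclusion) satisfying J ⊆ τ and h ∈ τ^{[p]}. -/

import Mathlib

/-!
STATEMENT 6: Assume `[k : k^p] < ∞`. For any ideals `a` and `b` of `S = k[x_0, …, x_n]`
one has `(a ∩ b)^{[p]} = a^{[p]} ∩ b^{[p]}`. Consequently, for any ideal `J` of `S` and
any `h ∈ S`, there exists a smallest ideal `τ` of `S` (with respect to inclusion)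
satisfying `J ⊆ τ` and `h ∈ τ^{[p]}`.
-/

noncomputable section

open MvPolynomial

/-- The `q`-th bracket (Frobenius) power `I^{[q]}` of an ideal. -/
def brk {R : Type} [CommRing R] (I : Ideal R) (q : ℕ) : Ideal R :=
  Ideal.span ((fun a => a ^ q) '' (I : Set R))

/-- A module-finite ring map gives a finite generating family with explicit coefficients. -/
lemma finite_gen' {A B : Type} [CommRing A] [CommRing B] (f : A →+* B) (hf : f.Finite) :
    ∃ t : Finset B, ∀ x : B, ∃ a : B → A, x = ∑ y ∈ t, f (a y) * y := by
  letI : Algebra A B := f.toAlgebra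
  haveI : Module.Finite A B := hf
  obtain ⟨t, ht⟩ := Module.Finite.fg_top (R := A) (M := B)
  refine ⟨t, fun x => ?_⟩
  have hx : x ∈ Submodule.span A (t : Set B) := ht.ge Submodule.mem_top
  obtain ⟨a, _, hsum⟩ := Submodule.mem_span_finset.mp hx
  refine ⟨a, ?_⟩
  rw [← hsum]
  exact Finset.sum_congr rfl fun i _ => by
    rw [Algebra.smul_def, RingHom.algebraMap_toAlgebra]

/-- A `p`-basis of `k` over `k^p`, with twisted-linear coordinate functions. -/
lemma pBasis' (k : Type) [Field k] (p : ℕ) [Fact p.Prime] [CharP k p]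
    (hfin : (frobenius k p).Finite) :
    ∃ (N : ℕ) (v : Fin N → k) (w : Fin N → k →+ k),
      (∀ j (a x : k), w j (a ^ p * x) = a * w j x) ∧
      (∀ x : k, ∑ j, (w j x) ^ p * v j = x) := by
  set L := (frobenius k p).fieldRange with hL
  haveI : Module.Finite L k := by
    obtain ⟨t, ht⟩ := finite_gen' _ hfin
    refine ⟨⟨t, eq_top_iff.mpr fun x _ => ?_⟩⟩
    obtain ⟨a, rfl⟩ := ht x
    refine Submodule.sum_mem _ fun y hy => ?_
    have : frobenius k p (a y) * y
        = (⟨frobenius k p (a y), ⟨a y, rfl⟩⟩ : L) • y := rfl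
    rw [this]
    exact Submodule.smul_mem _ _ (Submodule.subset_span hy)
  let v := Module.finBasis L k
  have hsurj : ∀ z : L, ∃ y : k, frobenius k p y = (z : k) := fun z =>
    RingHom.mem_fieldRange.mp z.2
  choose u hu using hsurj
  have hinj : Function.Injective (frobenius k p) := (frobenius k p).injective
  refine ⟨Module.finrank L k, fun j => v j,
    fun j => AddMonoidHom.mk' (fun x => u (v.repr x j)) ?_, ?_, ?_⟩
  · intro x y
    apply hinj
    rw [RingHom.map_add, hu, hu, hu, map_add, Finsupp.add_apply]
    push_cast
    ring
  · intro j a x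
    apply hinj
    simp only [AddMonoidHom.mk'_apply]
    have hax : a ^ p * x = (⟨frobenius k p a, ⟨a, rfl⟩⟩ : L) • x := by
      show _ = frobenius k p a * x; rw [frobenius_def]
    rw [RingHom.map_mul, hu, hu, hax, map_smul, Finsupp.smul_apply, smul_eq_mul]
    push_cast
    ring
  · intro x
    conv_rhs => rw [← v.sum_repr x]
    refine Finset.sum_congr rfl fun j _ => ?_
    simp only [AddMonoidHom.mk'_apply]
    rw [← frobenius_def, hu]
    rfl

variable {k : Type} [Field k] {p : ℕ} [Fact p.Prime] [CharP k p]
variable {σ : Type} [Fintype σ] [DecidableEq σ]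

/-- Divide all exponents by `p`. -/
def divP (p : ℕ) (d : σ →₀ ℕ) : σ →₀ ℕ := d.mapRange (· / p) (Nat.zero_div p)

/-- A tuple `α` with entries `< p` viewed as an exponent vector. -/
def aHat (α : σ → Fin p) : σ →₀ ℕ := Finsupp.equivFunOnFinite.symm (fun i => (α i : ℕ))

/-- The coordinate map extracting the part of a polynomial whose exponents are `≡ α mod p`,
with exponents divided by `p` and coefficients processed by `w`. -/
def Cmap (p : ℕ) (w : k →+ k) (α : σ → Fin p) :
    MvPolynomial σ k →+ MvPolynomial σ k :=
  (Finsupp.liftAddHom (fun d => if (∀ i, d i % p = (α i : ℕ)) then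
    ((MvPolynomial.monomial (divP p d)).toAddMonoidHom.comp w) else 0)).comp
    AddMonoidAlgebra.coeffAddEquiv.toAddMonoidHom

omit [Fact (Nat.Prime p)] [CharP k p] [DecidableEq σ] in
lemma Cmap_monomial (w : k →+ k) (α : σ → Fin p) (d : σ →₀ ℕ) (a : k) :
    Cmap p w α (monomial d a) =
      if (∀ i, d i % p = (α i : ℕ)) then monomial (divP p d) (w a) else 0 := by
  rw [← single_eq_monomial]
  show Finsupp.liftAddHom _ (Finsupp.single d a) = _
  rw [Finsupp.liftAddHom_apply_single]
  split_ifs with h <;> simp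

omit [DecidableEq σ] in
lemma Cmap_twist (w : k →+ k) (hw : ∀ a x : k, w (a ^ p * x) = a * w x)
    (α : σ → Fin p) (g f : MvPolynomial σ k) :
    Cmap p w α (g ^ p * f) = g * Cmap p w α f := by
  induction f using MvPolynomial.induction_on' with
  | add f₁ f₂ h1 h2 => rw [mul_add, map_add, map_add, mul_add, h1, h2]
  | monomial d a =>
    induction g using MvPolynomial.induction_on' with
    | add g₁ g₂ h1 h2 =>
      rw [add_pow_char, add_mul, map_add, h1, h2, add_mul]
    | monomial e b =>
      rw [monomial_pow, monomial_mul, Cmap_monomial, Cmap_monomial]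
      have hcond : (∀ i, (p • e + d) i % p = (α i : ℕ)) ↔ (∀ i, d i % p = (α i : ℕ)) := by
        apply forall_congr'
        intro i
        rw [Finsupp.add_apply, Finsupp.smul_apply, smul_eq_mul, Nat.mul_add_mod]
      rw [if_congr hcond rfl rfl, mul_ite, mul_zero, monomial_mul]
      have hdiv : divP p (p • e + d) = e + divP p d := by
        ext i
        simp only [divP, Finsupp.mapRange_apply, Finsupp.add_apply, Finsupp.smul_apply,
          smul_eq_mul]
        rw [Nat.add_comm (p * e i) (d i), Nat.add_mul_div_left _ _ (Fact.out : p.Prime).pos]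
        omega
      rw [hdiv, hw]

lemma Cmap_reconstruct {N : ℕ} (v : Fin N → k) (w : Fin N → k →+ k)
    (hw4 : ∀ x : k, ∑ j, (w j x) ^ p * v j = x) (f : MvPolynomial σ k) :
    ∑ j : Fin N, ∑ α : σ → Fin p,
      (Cmap p (w j) α f) ^ p * monomial (aHat α) (v j) = f := by
  induction f using MvPolynomial.induction_on' with
  | add f₁ f₂ h1 h2 =>
    have expand : ∑ j : Fin N, ∑ α : σ → Fin p,
        (Cmap p (w j) α (f₁ + f₂)) ^ p * monomial (aHat α) (v j)
        = (∑ j : Fin N, ∑ α : σ → Fin p,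
            (Cmap p (w j) α f₁) ^ p * monomial (aHat α) (v j))
          + ∑ j : Fin N, ∑ α : σ → Fin p,
            (Cmap p (w j) α f₂) ^ p * monomial (aHat α) (v j) := by
      rw [← Finset.sum_add_distrib]
      refine Finset.sum_congr rfl fun j _ => ?_
      rw [← Finset.sum_add_distrib]
      refine Finset.sum_congr rfl fun α _ => ?_
      rw [map_add, add_pow_char, add_mul]
    rw [expand, h1, h2]
  | monomial d a =>
    have hp : 0 < p := (Fact.out : p.Prime).pos
    set α₀ : σ → Fin p := fun i => ⟨d i % p, Nat.mod_lt _ hp⟩ with hα₀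
    have key : ∀ j : Fin N, ∑ α : σ → Fin p,
        (Cmap p (w j) α (monomial d a)) ^ p * monomial (aHat α) (v j)
        = monomial d ((w j a) ^ p * v j) := by
      intro j
      have hde : p • divP p d + aHat α₀ = d := by
        ext i
        simp only [Finsupp.add_apply, Finsupp.smul_apply, smul_eq_mul, divP,
          Finsupp.mapRange_apply, aHat, Finsupp.equivFunOnFinite_symm_apply_apply, hα₀]
        exact Nat.div_add_mod (d i) p
      rw [Finset.sum_eq_single α₀]
      · rw [Cmap_monomial, if_pos (fun i => rfl), monomial_pow, monomial_mul, hde]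
      · intro α _ hne
        rw [Cmap_monomial, if_neg, zero_pow hp.ne', zero_mul]
        intro hcond
        exact hne (funext fun i => Fin.ext ((hcond i).symm))
      · intro habs
        exact absurd (Finset.mem_univ α₀) habs
    rw [Finset.sum_congr rfl fun j _ => key j]
    rw [← map_sum (monomial d)]
    rw [hw4]

lemma mem_brk_iff {N : ℕ} (v : Fin N → k) (w : Fin N → k →+ k)
    (hw3 : ∀ j (a x : k), w j (a ^ p * x) = a * w j x)
    (hw4 : ∀ x : k, ∑ j, (w j x) ^ p * v j = x)
    (I : Ideal (MvPolynomial σ k)) (f : MvPolynomial σ k) :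
    f ∈ brk I p ↔ ∀ (j : Fin N) (α : σ → Fin p), Cmap p (w j) α f ∈ I := by
  constructor
  · intro hf
    have key : ∀ (s : MvPolynomial σ k) (j : Fin N) (α : σ → Fin p),
        Cmap p (w j) α (s * f) ∈ I := by
      refine Submodule.span_induction (hx := hf) ?_ ?_ ?_ ?_
      · rintro x ⟨g, hg, rfl⟩ s j α
        rw [mul_comm, Cmap_twist (w j) (hw3 j)]
        exact I.mul_mem_right _ hg
      · intro s j α
        rw [mul_zero, map_zero]
        exact I.zero_mem
      · intro x y _ _ hx hy s j α
        rw [mul_add, map_add]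
        exact I.add_mem (hx s j α) (hy s j α)
      · intro t x _ hx s j α
        have : s * (t • x) = (s * t) * x := by
          rw [smul_eq_mul]; ring
        rw [this]
        exact hx (s * t) j α
    intro j α
    have := key 1 j α
    rwa [one_mul] at this
  · intro hC
    rw [← Cmap_reconstruct v w hw4 f]
    refine Submodule.sum_mem _ fun j _ => Submodule.sum_mem _ fun α _ => ?_
    exact Ideal.mul_mem_right _ _
      (Ideal.subset_span ⟨Cmap p (w j) α f, hC j α, rfl⟩)

theorem stmt6 (k : Type) [Field k] (p : ℕ) [Fact p.Prime] [CharP k p]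
    (hfin : (frobenius k p).Finite) (n : ℕ) :
    (∀ a b : Ideal (MvPolynomial (Fin (n + 1)) k),
        brk (a ⊓ b) p = brk a p ⊓ brk b p) ∧
      (∀ (J : Ideal (MvPolynomial (Fin (n + 1)) k)) (h : MvPolynomial (Fin (n + 1)) k),
        ∃ τ : Ideal (MvPolynomial (Fin (n + 1)) k),
          (J ≤ τ ∧ h ∈ brk τ p) ∧
            ∀ a : Ideal (MvPolynomial (Fin (n + 1)) k),
              J ≤ a → h ∈ brk a p → τ ≤ a) := by
  obtain ⟨N, v, w, hw3, hw4⟩ := pBasis' k p hfin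
  constructor
  · intro a b
    ext f
    rw [mem_brk_iff v w hw3 hw4, Submodule.mem_inf,
      mem_brk_iff v w hw3 hw4, mem_brk_iff v w hw3 hw4]
    constructor
    · intro hf
      exact ⟨fun j α => (hf j α).1, fun j α => (hf j α).2⟩
    · intro hf j α
      exact ⟨hf.1 j α, hf.2 j α⟩
  · intro J h
    refine ⟨J ⊔ Ideal.span (Set.range fun jα : Fin N × (Fin (n + 1) → Fin p) =>
      Cmap p (w jα.1) jα.2 h), ⟨le_sup_left, ?_⟩, ?_⟩
    · rw [mem_brk_iff v w hw3 hw4]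
      intro j α
      exact le_sup_right (α := Ideal (MvPolynomial (Fin (n + 1)) k)) (Ideal.subset_span ⟨(j, α), rfl⟩)
    · intro a hJ hmem
      rw [mem_brk_iff v w hw3 hw4] at hmem
      refine sup_le hJ (Ideal.span_le.mpr ?_)
      rintro x ⟨⟨j, α⟩, rfl⟩
      exact hmem j α
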